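/- arXiv:1407.0480 — 3 statements merged into one kernel-verified Lean document; each statement's English description precedes it below -/
import Mathlib

section
/- Let F be a field, G an abelian group, A a nonassociative F-algebra, and Γ : A = ⊕_{g∈G} A_g a G-grading on A. Let F[G] denote the group algebra of G over F. Then there is a unique F[G]-algebra automorphism θ_Γ of A ⊗_F F[G] such that θ_Γ(a ⊗ r) = a ⊗ (g·r) for every g ∈ G, a ∈ A_g, and r ∈ F[G] (where g·r denotes multiplication in F[G] by the basis element g). -/
open scoped TensorProduct

universe u

section GradingDefs

variable {F : Type*} [Field F] {A : Type*} [NonUnitalNonAssocSemiring A] [Module F A]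

/-- The family `comp` of `F`-subspaces is a grading of the nonassociative `F`-algebra `A`
by the abelian group `G`: `A` is the (internal) direct sum of the subspaces `comp g`, and
`comp g * comp h ⊆ comp (g * h)`. -/
def IsGrading {G : Type*} [CommGroup G] (comp : G → Submodule F A) : Prop :=
  iSupIndep comp ∧ (⨆ g, comp g) = ⊤ ∧
    ∀ (g h : G) (a b : A), a ∈ comp g → b ∈ comp h → a * b ∈ comp (g * h)

/-- The support of a grading: those degrees with nonzero homogeneous component. -/
def gradingSupp {G : Type*} [CommGroup G] (comp : G → Submodule F A) : Set G :=
  {g | comp g ≠ ⊥}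

/-- A linear automorphism of `A` is an algebra automorphism if it preserves multiplication. -/
def IsAlgAut (φ : A ≃ₗ[F] A) : Prop := ∀ a b : A, φ (a * b) = φ a * φ b

/-- Two `G`-gradings are isomorphic if some algebra automorphism maps each homogeneous
component of the first onto the component of the same degree of the second. -/
def GradingIso {G : Type*} [CommGroup G] (comp comp' : G → Submodule F A) : Prop :=
  ∃ φ : A ≃ₗ[F] A, IsAlgAut φ ∧
    ∀ g, (comp g).map (φ : A →ₗ[F] A) = comp' g

/-- A `G`-grading and an `H`-grading are equivalent if there are a bijection `α` between the
supports and an algebra automorphism `φ` with `φ (comp g) = comp' (α g)` on the support. -/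
def GradingEquiv {G : Type*} [CommGroup G] {H : Type*} [CommGroup H]
    (comp : G → Submodule F A) (comp' : H → Submodule F A) : Prop :=
  ∃ (α : G → H) (φ : A ≃ₗ[F] A), IsAlgAut φ ∧
    Set.BijOn α (gradingSupp comp) (gradingSupp comp') ∧
    ∀ g ∈ gradingSupp comp, (comp g).map (φ : A →ₗ[F] A) = comp' (α g)

/-- An `H`-indexed family `comp'` refines a `G`-indexed family `comp` if every nonzero
component of `comp'` is contained in some nonzero component of `comp`. -/
def IsRefinement {H : Type*} [CommGroup H] {G : Type*} [CommGroup G]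
    (comp' : H → Submodule F A) (comp : G → Submodule F A) : Prop :=
  ∀ h ∈ gradingSupp comp', ∃ g ∈ gradingSupp comp, comp' h ≤ comp g

/-- A refinement is proper if some containment of a nonzero component of the refinement in a
component of the coarser grading is strict. -/
def IsProperRefinement {H : Type*} [CommGroup H] {G : Type*} [CommGroup G]
    (comp' : H → Submodule F A) (comp : G → Submodule F A) : Prop :=
  IsRefinement comp' comp ∧
    ∃ h ∈ gradingSupp comp', ∃ g ∈ gradingSupp comp, comp' h < comp g

/-- A grading is fine if it admits no proper refinement which is itself a grading by an
abelian group. -/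
def IsFine {G : Type*} [CommGroup G] (comp : G → Submodule F A) : Prop :=
  ∀ (H : Type u) (_ : CommGroup H) (comp' : H → Submodule F A),
    IsGrading comp' → ¬ IsProperRefinement comp' comp

end GradingDefs

section Aux
variable {F : Type*} [Field F]
    {A : Type*} [NonUnitalNonAssocRing A] [Module F A]
    [SMulCommClass F A A] [IsScalarTower F A A]
    {G : Type*} [CommGroup G] [DecidableEq G] (comp : G → Submodule F A)
    (hcomp : iSupIndep comp ∧ (⨆ g, comp g) = ⊤)

noncomputable def decompEquiv : (DirectSum G fun g => comp g) ≃ₗ[F] A :=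
  LinearEquiv.ofBijective (DirectSum.coeLinearMap comp)
    (DirectSum.isInternal_submodule_of_iSupIndep_of_iSup_eq_top hcomp.1 hcomp.2)

noncomputable def phiAux (f : G → G) : A →ₗ[F] MonoidAlgebra F G ⊗[F] A :=
  (DirectSum.toModule F G _ (fun g =>
    (TensorProduct.mk F (MonoidAlgebra F G) A (MonoidAlgebra.of F G (f g))).comp
      (comp g).subtype)) ∘ₗ (decompEquiv comp hcomp).symm.toLinearMap

set_option linter.unusedSectionVars false

theorem phiAux_of_mem (f : G → G) {g : G} {a : A} (ha : a ∈ comp g) :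
    phiAux comp hcomp f a = (MonoidAlgebra.of F G (f g)) ⊗ₜ[F] a := by
  have h1 : (decompEquiv comp hcomp).symm a = DirectSum.lof F G (fun g => comp g) g ⟨a, ha⟩ := by
    rw [LinearEquiv.symm_apply_eq]
    simp [decompEquiv, DirectSum.lof_eq_of, DirectSum.coeLinearMap_of]
    exact (DirectSum.coeLinearMap_of comp g ⟨a, ha⟩).symm
  simp [phiAux, h1, DirectSum.toModule_lof]

noncomputable def thetaFun (f : G → G) :
    MonoidAlgebra F G ⊗[F] A →ₗ[MonoidAlgebra F G] MonoidAlgebra F G ⊗[F] A :=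
  LinearMap.liftBaseChange (MonoidAlgebra F G) (phiAux comp hcomp f)

theorem thetaFun_tmul (f : G → G) {g : G} {a : A} (ha : a ∈ comp g)
    (r : MonoidAlgebra F G) :
    thetaFun comp hcomp f (r ⊗ₜ[F] a) = (MonoidAlgebra.of F G (f g) * r) ⊗ₜ[F] a := by
  rw [thetaFun, LinearMap.liftBaseChange_tmul, phiAux_of_mem comp hcomp f ha,
    TensorProduct.smul_tmul', smul_eq_mul, mul_comm]

theorem thetaFun_comp (f f' : G → G)
    (hinv : ∀ g, MonoidAlgebra.of F G (f' g) * MonoidAlgebra.of F G (f g) = 1) :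
    (thetaFun comp hcomp f').comp (thetaFun comp hcomp f) = LinearMap.id := by
  apply LinearMap.ext; intro x
  induction x using TensorProduct.induction_on with
  | zero => simp
  | add x y hx hy => simp only [map_add, LinearMap.comp_apply, LinearMap.id_apply] at *; rw [hx, hy]
  | tmul r a =>
    have ha : a ∈ ⨆ g, comp g := hcomp.2 ▸ Submodule.mem_top
    refine Submodule.iSup_induction (x := a)
      (motive := fun a => (thetaFun comp hcomp f').comp (thetaFun comp hcomp f) (r ⊗ₜ[F] a)
        = LinearMap.id (R := MonoidAlgebra F G) (r ⊗ₜ[F] a)) comp ha ?_ ?_ ?_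
    · intro g a hag
      simp only [LinearMap.comp_apply, thetaFun_tmul comp hcomp f hag,
        thetaFun_tmul comp hcomp f' hag, LinearMap.id_apply, ← mul_assoc, hinv g, one_mul]
    · simp
    · intro x y hx hy
      simp only [TensorProduct.tmul_add, map_add, hx, hy]
end Aux

/-- a `G`-grading yields a unique `F[G]`-algebra automorphism `θ_Γ` of
`A ⊗_F F[G]` with `θ_Γ (a ⊗ r) = a ⊗ (g·r)` for homogeneous `a` of degree `g`. -/
theorem grading_generic_automorphism
    {F : Type*} [Field F]
    {A : Type*} [NonUnitalNonAssocRing A] [Module F A]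
    [SMulCommClass F A A] [IsScalarTower F A A]
    {G : Type*} [CommGroup G] (comp : G → Submodule F A)
    (hcomp : IsGrading comp) :
    ∃! θ : (MonoidAlgebra F G) ⊗[F] A ≃ₗ[MonoidAlgebra F G] (MonoidAlgebra F G) ⊗[F] A,
      (∀ x y : (MonoidAlgebra F G) ⊗[F] A, θ (x * y) = θ x * θ y) ∧
      ∀ (g : G) (a : A), a ∈ comp g → ∀ r : MonoidAlgebra F G,
        θ (r ⊗ₜ[F] a) = (MonoidAlgebra.of F G g * r) ⊗ₜ[F] a  := by
  classical
  set R := MonoidAlgebra F G with hR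
  obtain ⟨hind, htop, hml⟩ := hcomp
  have hc : iSupIndep comp ∧ (⨆ g, comp g) = ⊤ := ⟨hind, htop⟩
  have hinv1 : ∀ g : G, MonoidAlgebra.of F G (id g)
      * MonoidAlgebra.of F G ((fun g : G => g⁻¹) g) = 1 := by
    intro g
    have h : (id g) * ((fun g : G => g⁻¹) g) = 1 := mul_inv_cancel g
    rw [← map_mul, h, map_one]
  have hinv2 : ∀ g : G, MonoidAlgebra.of F G ((fun g : G => g⁻¹) g)
      * MonoidAlgebra.of F G (id g) = 1 := by
    intro g
    have h : ((fun g : G => g⁻¹) g) * (id g) = 1 := inv_mul_cancel g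
    rw [← map_mul, h, map_one]
  set θ : R ⊗[F] A ≃ₗ[R] R ⊗[F] A :=
    LinearEquiv.ofLinear (thetaFun comp hc id) (thetaFun comp hc (fun g => g⁻¹))
      (thetaFun_comp comp hc _ _ hinv1) (thetaFun_comp comp hc _ _ hinv2) with hθ
  have htmul : ∀ (g : G) (a : A), a ∈ comp g → ∀ r : R,
      θ (r ⊗ₜ[F] a) = (MonoidAlgebra.of F G g * r) ⊗ₜ[F] a := by
    intro g a ha r
    rw [hθ]
    exact thetaFun_tmul comp hc id ha r
  have hmul : ∀ x y : R ⊗[F] A, θ (x * y) = θ x * θ y := by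
    intro x y
    induction x using TensorProduct.induction_on with
    | zero => simp
    | add x₁ x₂ h1 h2 => rw [add_mul, map_add, map_add, add_mul, h1, h2]
    | tmul r a =>
      induction y using TensorProduct.induction_on with
      | zero => simp
      | add y₁ y₂ h1 h2 => rw [mul_add, map_add, map_add, mul_add, h1, h2]
      | tmul s b =>
        have hb : b ∈ ⨆ g, comp g := htop ▸ Submodule.mem_top
        refine Submodule.iSup_induction (x := b)
          (motive := fun b => θ ((r ⊗ₜ[F] a) * (s ⊗ₜ[F] b))
            = θ (r ⊗ₜ[F] a) * θ (s ⊗ₜ[F] b)) comp hb ?_ ?_ ?_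
        · intro k b hbk
          have ha : a ∈ ⨆ g, comp g := htop ▸ Submodule.mem_top
          refine Submodule.iSup_induction (x := a)
            (motive := fun a => θ ((r ⊗ₜ[F] a) * (s ⊗ₜ[F] b))
              = θ (r ⊗ₜ[F] a) * θ (s ⊗ₜ[F] b)) comp ha ?_ ?_ ?_
          · intro g a hag
            rw [Algebra.TensorProduct.tmul_mul_tmul,
              htmul _ _ (hml g k a b hag hbk), htmul g a hag, htmul k b hbk,
              Algebra.TensorProduct.tmul_mul_tmul, map_mul]
            congr 1
            ring
          · simp
          · intro x y hx hy
            rw [TensorProduct.tmul_add, add_mul, map_add, map_add, add_mul, hx, hy]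
        · simp
        · intro x y hx hy
          rw [TensorProduct.tmul_add, mul_add, map_add, map_add, mul_add, hx, hy]
  refine ⟨θ, ⟨hmul, htmul⟩, ?_⟩
  rintro θ' ⟨-, htmul'⟩
  apply LinearEquiv.toLinearMap_injective
  apply LinearMap.ext
  intro x
  induction x using TensorProduct.induction_on with
  | zero => rw [map_zero, map_zero]
  | add x y hx hy => simp only [LinearMap.coe_coe, map_add] at *; rw [hx, hy]
  | tmul r a =>
    have ha : a ∈ ⨆ g, comp g := htop ▸ Submodule.mem_top
    refine Submodule.iSup_induction (x := a)
      (motive := fun a => (θ' : R ⊗[F] A →ₗ[R] R ⊗[F] A) (r ⊗ₜ[F] a)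
        = (θ : R ⊗[F] A →ₗ[R] R ⊗[F] A) (r ⊗ₜ[F] a)) comp ha ?_ ?_ ?_
    · intro g a hag
      show θ' (r ⊗ₜ[F] a) = θ (r ⊗ₜ[F] a)
      rw [htmul' g a hag r, htmul g a hag r]
    · simp only [TensorProduct.tmul_zero, map_zero]
    · intro x y hx hy
      simp only [LinearMap.coe_coe, TensorProduct.tmul_add, map_add] at *
      rw [hx, hy]
end

section
/- Let F be an algebraically closed field of characteristic 0, K/F a field extension with K algebraically closed, A a finite-dimensional nonassociative F-algebra, and G a finitely generated abelian group. Let Γ : A = ⊕_{g∈G} A_g and Γ' : A = ⊕_{g∈G} A'_g be G-gradings on A. If the extended gradings Γ_K and Γ'_K on A_K = A ⊗_F K are isomorphic (i.e., some K-algebra automorphism of A_K maps A_g ⊗_F K onto A'_g ⊗_F K for all g ∈ G), then Γ and Γ' are isomorphic (i.e., some F-algebra automorphism of A maps A_g onto A'_g for all g ∈ G). -/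
open scoped TensorProduct

universe u

section Transfer

open MvPolynomial in
theorem exists_aeval_zero_of_extension {σ : Type*} [Finite σ]
    {F : Type*} [Field F] [IsAlgClosed F]
    {K : Type*} [Field K] [Algebra F K]
    (S : Set (MvPolynomial σ F))
    (hK : ∃ x : σ → K, ∀ p ∈ S, MvPolynomial.aeval x p = 0) :
    ∃ x : σ → F, ∀ p ∈ S, MvPolynomial.aeval x p = 0 := by
  by_contra hF
  push_neg at hF
  obtain ⟨x, hx⟩ := hK
  have hzero : zeroLocus F (Ideal.span S) = ∅ := by
    ext y
    simp only [Set.mem_empty_iff_false, iff_false, mem_zeroLocus_iff]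
    intro hy
    obtain ⟨p, hpS, hp⟩ := hF y
    have heval := hy p (Ideal.subset_span hpS)
    have : (MvPolynomial.aeval y) p = eval y p := by
      rw [MvPolynomial.aeval_def, Algebra.algebraMap_self]
      rfl
    exact hp (this.trans heval)
  have hrad : (Ideal.span S).radical = ⊤ := by
    rw [← vanishingIdeal_zeroLocus_eq_radical (K := F), hzero, vanishingIdeal_empty]
  have htop : Ideal.span S = ⊤ := Ideal.radical_eq_top.mp hrad
  have hle : Ideal.span S ≤ RingHom.ker ((MvPolynomial.aeval x :
      MvPolynomial σ F →ₐ[F] K) : MvPolynomial σ F →+* K) := by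
    rw [Ideal.span_le]
    intro p hp
    exact hx p hp
  have h1 : (1 : MvPolynomial σ F) ∈ RingHom.ker ((MvPolynomial.aeval x :
      MvPolynomial σ F →ₐ[F] K) : MvPolynomial σ F →+* K) :=
    hle (htop ▸ Submodule.mem_top)
  simp [RingHom.mem_ker] at h1

end Transfer

section KeyLemmas

variable {R : Type*} [Field R] {B : Type*} [NonUnitalNonAssocSemiring B] [Module R B]
  [SMulCommClass R B B] [IsScalarTower R B B]
  {ι : Type*} [Fintype ι] [DecidableEq ι]

theorem repr_map_mul_basis (e : Module.Basis ι R B) (φ : B →ₗ[R] B) (i j l : ι) :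
    e.repr (φ (e i * e j)) l = ∑ k, e.repr (e i * e j) k * e.repr (φ (e k)) l := by
  conv_lhs => rw [← e.sum_repr (e i * e j)]
  rw [map_sum, map_sum, Finsupp.finset_sum_apply]
  simp only [map_smul, Finsupp.smul_apply, smul_eq_mul]

theorem repr_mul_map_basis (e : Module.Basis ι R B) (φ : B →ₗ[R] B) (i j l : ι) :
    e.repr (φ (e i) * φ (e j)) l
      = ∑ p, ∑ q, e.repr (φ (e i)) p * e.repr (φ (e j)) q * e.repr (e p * e q) l := by
  have hmul : φ (e i) * φ (e j)
      = ∑ p, ∑ q, (e.repr (φ (e i)) p * e.repr (φ (e j)) q) • (e p * e q) := by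
    conv_lhs => rw [← e.sum_repr (φ (e i)), ← e.sum_repr (φ (e j))]
    rw [Finset.sum_mul]
    refine Finset.sum_congr rfl fun p _ => ?_
    rw [Finset.mul_sum]
    refine Finset.sum_congr rfl fun q _ => ?_
    rw [smul_mul_assoc, mul_smul_comm, smul_smul]
  rw [hmul]
  simp [map_sum, Finset.sum_apply', Finsupp.smul_apply, smul_eq_mul, mul_assoc]

theorem isAlgAut_iff_basis (e : Module.Basis ι R B) (φ : B ≃ₗ[R] B) :
    IsAlgAut φ ↔ ∀ i j, φ (e i * e j) = φ (e i) * φ (e j) := by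
  refine ⟨fun h i j => h _ _, fun h a b' => ?_⟩
  have key : ((LinearMap.mul R B).compr₂ (φ : B →ₗ[R] B))
      = ((LinearMap.mul R B).compl₁₂ (φ : B →ₗ[R] B) (φ : B →ₗ[R] B)) := by
    refine Module.Basis.ext e fun i => Module.Basis.ext e fun j => ?_
    simpa [LinearMap.compr₂_apply, LinearMap.compl₁₂_apply] using h i j
  have := LinearMap.congr_fun (LinearMap.congr_fun key a) b'
  simpa [LinearMap.compr₂_apply, LinearMap.compl₁₂_apply] using this

theorem isAlgAut_iff_matrix (e : Module.Basis ι R B) (φ : B ≃ₗ[R] B) :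
    IsAlgAut φ ↔ ∀ i j l,
      (∑ k, e.repr (e i * e j) k * LinearMap.toMatrix e e (φ : B →ₗ[R] B) l k)
        = ∑ p, ∑ q, LinearMap.toMatrix e e (φ : B →ₗ[R] B) p i *
            LinearMap.toMatrix e e (φ : B →ₗ[R] B) q j * e.repr (e p * e q) l := by
  rw [isAlgAut_iff_basis e φ]
  refine forall₂_congr fun i j => ?_
  have h1 : ∀ l, (e.repr ((φ : B →ₗ[R] B) (e i * e j))) l
      = ∑ k, e.repr (e i * e j) k * LinearMap.toMatrix e e (φ : B →ₗ[R] B) l k := by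
    intro l
    rw [repr_map_mul_basis]
    simp only [LinearMap.toMatrix_apply]
  have h2 : ∀ l, (e.repr ((φ : B →ₗ[R] B) (e i) * (φ : B →ₗ[R] B) (e j))) l
      = ∑ p, ∑ q, LinearMap.toMatrix e e (φ : B →ₗ[R] B) p i *
          LinearMap.toMatrix e e (φ : B →ₗ[R] B) q j * e.repr (e p * e q) l := by
    intro l
    rw [repr_mul_map_basis]
    simp only [LinearMap.toMatrix_apply]
  constructor
  · intro hEq l
    rw [← h1 l, ← h2 l]
    exact congrArg (fun z => e.repr z l) hEq
  · intro hS
    refine Module.Basis.ext_elem e fun l => ?_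
    show (e.repr ((φ : B →ₗ[R] B) (e i * e j))) l
      = (e.repr ((φ : B →ₗ[R] B) (e i) * (φ : B →ₗ[R] B) (e j))) l
    rw [h1 l, h2 l]
    exact hS l

end KeyLemmas

section Rank

theorem submodule_range_baseChange {F K M : Type*} [Field F] [Field K] [Algebra F K]
    [AddCommGroup M] [Module F M] (p : Submodule F M) :
    LinearMap.range (p.subtype.baseChange K) = p.baseChange K := by
  apply le_antisymm
  · rintro z ⟨w, rfl⟩
    induction w using TensorProduct.induction_on with
    | zero => simp
    | tmul k m =>
      rw [LinearMap.baseChange_tmul]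
      exact Submodule.tmul_mem_baseChange_of_mem k m.2
    | add a b ha hb =>
      rw [map_add]
      exact Submodule.add_mem _ ha hb
  · rw [Submodule.baseChange_eq_span, Submodule.span_le]
    rintro z ⟨m, hm, rfl⟩
    exact ⟨1 ⊗ₜ ⟨m, hm⟩, by simp⟩

theorem finrank_baseChange_eq {F K M : Type*} [Field F] [Field K] [Algebra F K]
    [AddCommGroup M] [Module F M] (p : Submodule F M) :
    Module.finrank K (p.baseChange K) = Module.finrank F p := by
  have hinj : Function.Injective (p.subtype.baseChange K) := by
    have := Module.Flat.lTensor_preserves_injective_linearMap (M := K)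
      p.subtype p.injective_subtype
    simpa only [← LinearMap.baseChange_eq_ltensor] using this
  calc Module.finrank K (p.baseChange K)
      = Module.finrank K (LinearMap.range (p.subtype.baseChange K)) := by
        rw [submodule_range_baseChange]
    _ = Module.finrank K (K ⊗[F] p) :=
        ((LinearEquiv.ofInjective _ hinj).finrank_eq).symm
    _ = Module.finrank F p := Module.finrank_baseChange

end Rank

section Polys

open MvPolynomial

variable {F : Type*} [CommRing F] {n : ℕ}

/-- Polynomial expressing multiplicativity of a matrix w.r.t. structure constants `c`. -/
noncomputable def polyMul (c : Fin n → Fin n → Fin n → F) (i j l : Fin n) :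
    MvPolynomial (Fin n × Fin n ⊕ Unit) F :=
  (∑ k, C (c i j k) * X (Sum.inl (l, k))) -
    ∑ p, ∑ q, X (Sum.inl (p, i)) * X (Sum.inl (q, j)) * C (c p q l)

/-- Polynomial expressing invertibility of a matrix. -/
noncomputable def polyDet (F : Type*) [CommRing F] (n : ℕ) :
    MvPolynomial (Fin n × Fin n ⊕ Unit) F :=
  X (Sum.inr ()) * Matrix.det (Matrix.of fun i j : Fin n => X (Sum.inl (i, j))) - 1

/-- Polynomial expressing that the matrix maps the vector `u` into the kernel of `Q`. -/
noncomputable def polyMap {m : ℕ} (Q : Matrix (Fin m) (Fin n) F) (u : Fin n → F) (r : Fin m) :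
    MvPolynomial (Fin n × Fin n ⊕ Unit) F :=
  ∑ i, C (Q r i) * ∑ j, X (Sum.inl (i, j)) * C (u j)

variable {R : Type*} [CommRing R] [Algebra F R] (x : Fin n × Fin n ⊕ Unit → R)

theorem aeval_polyMul (c : Fin n → Fin n → Fin n → F) (i j l : Fin n) :
    MvPolynomial.aeval x (polyMul c i j l)
      = (∑ k, algebraMap F R (c i j k) * x (Sum.inl (l, k))) -
          ∑ p, ∑ q, x (Sum.inl (p, i)) * x (Sum.inl (q, j)) * algebraMap F R (c p q l) := by
  simp [polyMul]

theorem aeval_polyDet :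
    MvPolynomial.aeval x (polyDet F n)
      = x (Sum.inr ()) * Matrix.det (Matrix.of fun i j : Fin n => x (Sum.inl (i, j))) - 1 := by
  rw [polyDet, map_sub, map_one, map_mul, aeval_X]
  congr 1
  rw [Matrix.det_apply', Matrix.det_apply']
  congr 1
  rw [map_sum]
  refine Finset.sum_congr rfl fun s _ => ?_
  rw [map_mul, map_prod]
  simp

theorem aeval_polyMap {m : ℕ} (Q : Matrix (Fin m) (Fin n) F) (u : Fin n → F) (r : Fin m) :
    MvPolynomial.aeval x (polyMap Q u r)
      = ∑ i, algebraMap F R (Q r i) * ∑ j, x (Sum.inl (i, j)) * algebraMap F R (u j) := by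
  simp [polyMap]

end Polys

set_option maxHeartbeats 2000000 in
/-- if the scalar extensions of two `G`-gradings on `A` are isomorphic, then
the gradings themselves are isomorphic. -/
theorem gradingIso_of_baseChange
    {F : Type*} [Field F] [IsAlgClosed F] [CharZero F]
    {K : Type*} [Field K] [Algebra F K] [IsAlgClosed K]
    {A : Type*} [NonUnitalNonAssocRing A] [Module F A]
    [SMulCommClass F A A] [IsScalarTower F A A] [FiniteDimensional F A]
    {G : Type*} [CommGroup G] [Group.FG G]
    (comp comp' : G → Submodule F A)
    (hcomp : IsGrading comp) (hcomp' : IsGrading comp')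
    (h : GradingIso (fun g : G => (comp g).baseChange K)
      (fun g : G => (comp' g).baseChange K)) :
    GradingIso comp comp' := by
  classical
  obtain ⟨φ, hφmul, hφmap0⟩ := h
  have hφmap : ∀ g : G, Submodule.map (φ : K ⊗[F] A →ₗ[K] K ⊗[F] A) ((comp g).baseChange K)
      = (comp' g).baseChange K := hφmap0
  clear hφmap0
  set n := Module.finrank F A with hn
  set b : Module.Basis (Fin n) F A := Module.finBasis F A with hbdef
  set c : Fin n → Fin n → Fin n → F := fun i j k => b.repr (b i * b j) k with hcdef
  set d : G → ℕ := fun g => Module.finrank F (comp g) with hddef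
  set v : (g : G) → Fin (d g) → A := fun g t => ((Module.finBasis F (comp g)) t : A) with hvdef
  have hvmem : ∀ g t, v g t ∈ comp g := fun g t => ((Module.finBasis F (comp g)) t).2
  have hspan : ∀ g, Submodule.span F (Set.range (v g)) = comp g := by
    intro g
    have h1 : Set.range (v g)
        = (comp g).subtype '' Set.range (Module.finBasis F (comp g)) := by
      rw [← Set.range_comp]; rfl
    rw [h1, Submodule.span_image, Module.Basis.span_eq, Submodule.map_subtype_top]
  set eQ : (g : G) → Module.Basis (Fin (Module.finrank F (A ⧸ comp' g))) F (A ⧸ comp' g) :=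
    fun g => Module.finBasis F _ with heQdef
  set Qm : (g : G) → Matrix (Fin (Module.finrank F (A ⧸ comp' g))) (Fin n) F :=
    fun g => LinearMap.toMatrix b (eQ g) (comp' g).mkQ with hQmdef
  set S : Set (MvPolynomial (Fin n × Fin n ⊕ Unit) F) :=
    {p | (∃ i j l, p = polyMul c i j l) ∨ p = polyDet F n ∨
      ∃ g t r, p = polyMap (Qm g) (fun j => b.repr (v g t) j) r} with hSdef
  -- the solution over K
  set bK : Module.Basis (Fin n) K (K ⊗[F] A) := Algebra.TensorProduct.basis K b with hbKdef
  set N : Matrix (Fin n) (Fin n) K :=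
    LinearMap.toMatrix bK bK (φ : K ⊗[F] A →ₗ[K] K ⊗[F] A) with hNdef
  set Ninv : Matrix (Fin n) (Fin n) K :=
    LinearMap.toMatrix bK bK (φ.symm : K ⊗[F] A →ₗ[K] K ⊗[F] A) with hNinvdef
  have hNN : N * Ninv = 1 := by
    rw [hNdef, hNinvdef, ← LinearMap.toMatrix_comp bK bK bK]
    rw [show ((φ : K ⊗[F] A →ₗ[K] K ⊗[F] A) ∘ₗ (φ.symm : K ⊗[F] A →ₗ[K] K ⊗[F] A))
        = LinearMap.id from by ext z; simp]
    exact LinearMap.toMatrix_id bK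
  set xK : Fin n × Fin n ⊕ Unit → K :=
    Sum.elim (fun ij => N ij.1 ij.2) (fun _ => Ninv.det) with hxKdef
  have hbKapp : ∀ i, bK i = (1 : K) ⊗ₜ[F] b i := fun i => Algebra.TensorProduct.basis_apply b i
  have hreprK : ∀ (a : A) (k : Fin n), bK.repr ((1 : K) ⊗ₜ[F] a) k = algebraMap F K (b.repr a k) := by
    intro a k
    rw [hbKdef, Algebra.TensorProduct.basis_repr_tmul]
    simp [Algebra.algebraMap_eq_smul_one]
  have hKsol : ∀ p ∈ S, MvPolynomial.aeval xK p = 0 := by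
    rintro p (⟨i, j, l, rfl⟩ | rfl | ⟨g, t, r, rfl⟩)
    · rw [aeval_polyMul]
      have hmulM := (isAlgAut_iff_matrix bK φ).mp hφmul i j l
      have hcK : ∀ i j k, bK.repr (bK i * bK j) k = algebraMap F K (c i j k) := by
        intro i j k
        rw [hbKapp, hbKapp, Algebra.TensorProduct.tmul_mul_tmul, one_mul, hreprK]
      rw [sub_eq_zero]
      calc ∑ k, algebraMap F K (c i j k) * xK (Sum.inl (l, k))
          = ∑ k, bK.repr (bK i * bK j) k
              * LinearMap.toMatrix bK bK (φ : K ⊗[F] A →ₗ[K] K ⊗[F] A) l k :=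
            Finset.sum_congr rfl fun k _ => by rw [hcK]; rfl
        _ = ∑ p', ∑ q, LinearMap.toMatrix bK bK (φ : K ⊗[F] A →ₗ[K] K ⊗[F] A) p' i *
              LinearMap.toMatrix bK bK (φ : K ⊗[F] A →ₗ[K] K ⊗[F] A) q j *
              bK.repr (bK p' * bK q) l := hmulM
        _ = ∑ p', ∑ q, xK (Sum.inl (p', i)) * xK (Sum.inl (q, j)) * algebraMap F K (c p' q l) :=
            Finset.sum_congr rfl fun p' _ => Finset.sum_congr rfl fun q _ => by rw [hcK]; rfl
    · rw [aeval_polyDet]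
      have h1 : (Matrix.of fun i j : Fin n => xK (Sum.inl (i, j))) = N := rfl
      have h2 : xK (Sum.inr ()) = Ninv.det := rfl
      rw [h1, h2, sub_eq_zero]
      have h3 : Ninv * N = 1 := mul_eq_one_comm.mp hNN
      calc Ninv.det * N.det = (Ninv * N).det := (Matrix.det_mul _ _).symm
        _ = 1 := by rw [h3, Matrix.det_one]
    · rw [aeval_polyMap]
      set z : K ⊗[F] A := φ ((1 : K) ⊗ₜ[F] v g t) with hzdef
      have hinner : ∀ i, (∑ j, xK (Sum.inl (i, j)) * algebraMap F K (b.repr (v g t) j))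
          = bK.repr z i := by
        intro i
        have hmv := congrFun (LinearMap.toMatrix_mulVec_repr bK bK
          (φ : K ⊗[F] A →ₗ[K] K ⊗[F] A) ((1 : K) ⊗ₜ[F] v g t)) i
        calc (∑ j, xK (Sum.inl (i, j)) * algebraMap F K (b.repr (v g t) j))
            = N.mulVec (⇑(bK.repr ((1 : K) ⊗ₜ[F] v g t))) i := by
              simp only [Matrix.mulVec, dotProduct]
              exact Finset.sum_congr rfl fun j _ => by rw [hreprK]; rfl
          _ = bK.repr ((φ : K ⊗[F] A →ₗ[K] K ⊗[F] A) ((1 : K) ⊗ₜ[F] v g t)) i := hmv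
          _ = bK.repr z i := rfl
      set qK : K ⊗[F] A →ₗ[K] K ⊗[F] (A ⧸ comp' g) := ((comp' g).mkQ).baseChange K with hqKdef
      set eQK : Module.Basis (Fin (Module.finrank F (A ⧸ comp' g))) K (K ⊗[F] (A ⧸ comp' g)) :=
        Algebra.TensorProduct.basis K (eQ g) with heQKdef
      have hQK : ∀ r i, LinearMap.toMatrix bK eQK qK r i = algebraMap F K (Qm g r i) := by
        intro r i
        rw [LinearMap.toMatrix_apply, hbKapp, hqKdef, LinearMap.baseChange_tmul, heQKdef,
          Algebra.TensorProduct.basis_repr_tmul]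
        simp [hQmdef, LinearMap.toMatrix_apply, Algebra.algebraMap_eq_smul_one]
      have hzmem : z ∈ (comp' g).baseChange K := by
        have h1 : (1 : K) ⊗ₜ[F] v g t ∈ (comp g).baseChange K :=
          Submodule.tmul_mem_baseChange_of_mem 1 (hvmem g t)
        have h2 := hφmap g
        rw [← h2]
        exact Submodule.mem_map_of_mem h1
      have hker : (comp' g).baseChange K ≤ LinearMap.ker qK := by
        rw [Submodule.baseChange_eq_span, Submodule.span_le]
        rintro w ⟨a', ha', rfl⟩
        simp only [SetLike.mem_coe, LinearMap.mem_ker, TensorProduct.mk_apply]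
        rw [hqKdef, LinearMap.baseChange_tmul]
        rw [show (comp' g).mkQ a' = 0 from by
          rw [Submodule.mkQ_apply]; exact (Submodule.Quotient.mk_eq_zero _).mpr ha']
        rw [TensorProduct.tmul_zero]
      have hqKz : qK z = 0 := hker hzmem
      have hmv2 := congrFun (LinearMap.toMatrix_mulVec_repr bK eQK qK z) r
      calc (∑ i, algebraMap F K (Qm g r i)
            * ∑ j, xK (Sum.inl (i, j)) * algebraMap F K (b.repr (v g t) j))
          = (LinearMap.toMatrix bK eQK qK).mulVec (⇑(bK.repr z)) r := by
            simp only [Matrix.mulVec, dotProduct]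
            exact Finset.sum_congr rfl fun i _ => by rw [hQK, hinner]
        _ = eQK.repr (qK z) r := hmv2
        _ = 0 := by rw [hqKz]; simp
  obtain ⟨xF, hxF⟩ := exists_aeval_zero_of_extension (K := K) S ⟨xK, hKsol⟩
  -- build the automorphism over F
  set NF : Matrix (Fin n) (Fin n) F := Matrix.of fun i j => xF (Sum.inl (i, j)) with hNFdef
  have hdet1 : xF (Sum.inr ()) * NF.det = 1 := by
    have h0 := hxF (polyDet F n) (Or.inr (Or.inl rfl))
    rw [aeval_polyDet, sub_eq_zero] at h0
    exact h0
  have hdetU : IsUnit NF.det := IsUnit.of_mul_eq_one _ (by rw [mul_comm]; exact hdet1)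
  set f : A →ₗ[F] A := Matrix.toLin b b NF with hfdef
  have hdetf : IsUnit (LinearMap.toMatrix b b f).det := by
    rw [hfdef, LinearMap.toMatrix_toLin]; exact hdetU
  set φF : A ≃ₗ[F] A := LinearEquiv.ofIsUnitDet hdetf with hφFdef
  have hφFcoe : (φF : A →ₗ[F] A) = f := LinearEquiv.coe_ofIsUnitDet hdetf
  have hNFmat : LinearMap.toMatrix b b (φF : A →ₗ[F] A) = NF := by
    rw [hφFcoe, hfdef, LinearMap.toMatrix_toLin]
  have hAut : IsAlgAut φF := by
    rw [isAlgAut_iff_matrix b φF]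
    intro i j l
    have h0 := hxF (polyMul c i j l) (Or.inl ⟨i, j, l, rfl⟩)
    rw [aeval_polyMul, sub_eq_zero] at h0
    simp only [Algebra.algebraMap_self, RingHom.id_apply] at h0
    rw [hNFmat]
    exact h0
  have hrank : ∀ g : G, Module.finrank F (comp g) = Module.finrank F (comp' g) := by
    intro g
    rw [← finrank_baseChange_eq (K := K) (comp g), ← finrank_baseChange_eq (K := K) (comp' g)]
    rw [← hφmap g]
    exact (LinearEquiv.finrank_map_eq φ _).symm
  refine ⟨φF, hAut, fun g => ?_⟩
  have hle : (comp g).map (φF : A →ₗ[F] A) ≤ comp' g := by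
    rw [← hspan g, Submodule.map_span, Submodule.span_le]
    rintro w ⟨w', ⟨t, rfl⟩, rfl⟩
    simp only [SetLike.mem_coe]
    have hrepr0 : ∀ r, (eQ g).repr ((comp' g).mkQ ((φF : A →ₗ[F] A) (v g t))) r = 0 := by
      intro r
      have h0 := hxF (polyMap (Qm g) (fun j => b.repr (v g t) j) r) (Or.inr (Or.inr ⟨g, t, r, rfl⟩))
      rw [aeval_polyMap] at h0
      simp only [Algebra.algebraMap_self, RingHom.id_apply] at h0
      have hmv1 := congrFun (LinearMap.toMatrix_mulVec_repr b (eQ g) (comp' g).mkQ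
        ((φF : A →ₗ[F] A) (v g t))) r
      have hmv2 := LinearMap.toMatrix_mulVec_repr b b (φF : A →ₗ[F] A) (v g t)
      calc (eQ g).repr ((comp' g).mkQ ((φF : A →ₗ[F] A) (v g t))) r
          = (Qm g).mulVec (⇑(b.repr ((φF : A →ₗ[F] A) (v g t)))) r := hmv1.symm
        _ = (Qm g).mulVec (NF.mulVec (⇑(b.repr (v g t)))) r := by rw [← hNFmat, hmv2]
        _ = 0 := by
            rw [← h0]
            simp only [Matrix.mulVec, dotProduct]
            rfl
    have hq0 : (comp' g).mkQ ((φF : A →ₗ[F] A) (v g t)) = 0 :=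
      (eQ g).ext_elem fun r => by rw [hrepr0 r]; simp
    have : (φF : A →ₗ[F] A) (v g t) ∈ comp' g := by
      rw [← Submodule.ker_mkQ (comp' g)]
      exact LinearMap.mem_ker.mpr hq0
    exact this
  have hfin : Module.finrank F ((comp g).map (φF : A →ₗ[F] A))
      = Module.finrank F (comp' g) := by
    rw [LinearEquiv.finrank_map_eq φF (comp g), hrank g]
  exact Submodule.eq_of_le_of_finrank_eq hle hfin
end

section
/- Let F be a field, K/F a field extension, A a nonassociative F-algebra, G and H abelian groups, Γ : A = ⊕_{g∈G} A_g a G-grading on A, and Γ̃ : A = ⊕_{h∈H} Ã_h an H-grading on A that is a proper refinement of Γ. Then the extended grading Γ̃_K on A_K = A ⊗_F K is a proper refinement of Γ_K. Consequently, if the extended grading Γ_K is fine, then Γ is fine. -/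
open scoped TensorProduct

universe u

section Aux

variable {F : Type*} [Field F] {K : Type*} [Field K] [Algebra F K]
variable {A : Type*} [AddCommGroup A] [Module F A]

lemma aux_exists_retraction : ∃ f : K →ₗ[F] F, f 1 = 1 := by
  obtain ⟨q, hq⟩ := (F ∙ (1:K)).exists_isCompl
  refine ⟨(LinearEquiv.toSpanNonzeroSingleton F K 1 one_ne_zero).symm.toLinearMap ∘ₗ
    Submodule.linearProjOfIsCompl _ q hq, ?_⟩
  have h1 : ((1:K) : K) ∈ F ∙ (1:K) := Submodule.mem_span_singleton_self _
  have : Submodule.linearProjOfIsCompl _ q hq (1:K) = ⟨1, h1⟩ :=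
    Submodule.linearProjOfIsCompl_apply_left hq ⟨1, h1⟩
  simp only [LinearMap.coe_comp, LinearEquiv.coe_coe, Function.comp_apply, this]
  rw [LinearEquiv.symm_apply_eq]
  exact Subtype.ext (by simp)

lemma aux_tmul_one_inj {x : A} (hx : (1:K) ⊗ₜ[F] x = 0) : x = 0 := by
  obtain ⟨f, hf⟩ := aux_exists_retraction (F := F) (K := K)
  have := congrArg ((TensorProduct.lid F A) ∘ (f.rTensor A)) hx
  simpa [hf] using this

lemma aux_tmul_one_mem_iff (p : Submodule F A) (x : A) :
    (1:K) ⊗ₜ[F] x ∈ p.baseChange K ↔ x ∈ p := by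
  refine ⟨fun hx => ?_, fun hx => Submodule.tmul_mem_baseChange_of_mem _ hx⟩
  obtain ⟨q, hq⟩ := p.exists_isCompl
  set e : A →ₗ[F] A := p.subtype ∘ₗ Submodule.projectionOnto p q hq with he
  set g : A →ₗ[F] A := LinearMap.id - e with hg
  have hgen : p.baseChange K ≤ LinearMap.ker (g.baseChange K) := by
    rw [Submodule.baseChange_eq_span]
    rw [Submodule.span_le]
    rintro - ⟨m, hm, rfl⟩
    simp only [SetLike.mem_coe, LinearMap.mem_ker, TensorProduct.mk_apply,
      LinearMap.baseChange_tmul]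
    have : g m = 0 := by
      simp [hg, he, Submodule.projectionOnto_apply_of_mem_left hq hm]
    rw [this, TensorProduct.tmul_zero]
  have h0 : (1:K) ⊗ₜ[F] (g x) = 0 := by
    have := hgen hx
    simpa using this
  have := aux_tmul_one_inj (F := F) h0
  have hxe : x = e x := by
    have h' : x - e x = 0 := by simpa [hg] using this
    exact sub_eq_zero.mp h'
  rw [hxe]
  exact SetLike.coe_mem _

lemma aux_baseChange_mono {p q : Submodule F A} (h : p ≤ q) :
    p.baseChange K ≤ q.baseChange K :=
  Submodule.baseChange_mono (A := K) h

lemma aux_baseChange_ne_bot {p : Submodule F A} (h : p ≠ ⊥) :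
    p.baseChange K ≠ ⊥ := by
  obtain ⟨x, hx, hx0⟩ := Submodule.exists_mem_ne_zero_of_ne_bot h
  intro hb
  have : (1:K) ⊗ₜ[F] x ∈ p.baseChange K := Submodule.tmul_mem_baseChange_of_mem _ hx
  rw [hb, Submodule.mem_bot] at this
  exact hx0 (aux_tmul_one_inj this)

lemma aux_baseChange_lt {p q : Submodule F A} (h : p < q) :
    p.baseChange K < q.baseChange K := by
  obtain ⟨x, hxq, hxp⟩ := SetLike.exists_of_lt h
  refine lt_of_le_of_ne (aux_baseChange_mono h.le) fun heq => hxp ?_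
  have : (1:K) ⊗ₜ[F] x ∈ p.baseChange K := by
    rw [heq]; exact Submodule.tmul_mem_baseChange_of_mem _ hxq
  exact (aux_tmul_one_mem_iff p x).mp this

end Aux

section Aux2

variable {F : Type*} [Field F] {K : Type*} [Field K] [Algebra F K]
variable {A : Type*} [NonUnitalNonAssocRing A] [Module F A]
variable [SMulCommClass F A A] [IsScalarTower F A A]

lemma aux_grading_baseChange {H : Type*} [CommGroup H] (comp' : H → Submodule F A)
    (hg : IsGrading comp') :
    IsGrading (fun h : H => (comp' h).baseChange K) := by
  obtain ⟨hind, hsup, hmul⟩ := hg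
  refine ⟨?_, ?_, ?_⟩
  · intro h
    have hcompl : IsCompl (comp' h) (⨆ j, ⨆ _ : j ≠ h, comp' j) := by
      refine ⟨hind h, codisjoint_iff.mpr <| le_antisymm le_top ?_⟩
      rw [← hsup]
      refine iSup_le fun j => ?_
      by_cases hj : j = h
      · subst hj; exact le_sup_left
      · exact le_trans (le_iSup₂ (f := fun j (_ : j ≠ h) => comp' j) j hj) le_sup_right
    set π : A →ₗ[F] A := (comp' h).subtype ∘ₗ Submodule.projectionOnto _ _ hcompl with hπ
    have hπ_id : ∀ m ∈ comp' h, π m = m := fun m hm => by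
      simp [hπ, Submodule.projectionOnto_apply_of_mem_left hcompl hm]
    have hπ_zero : ∀ m ∈ (⨆ j, ⨆ _ : j ≠ h, comp' j), π m = 0 := fun m hm => by
      simp [hπ, Submodule.projectionOnto_apply_of_mem_right hcompl hm]
    set P : K ⊗[F] A →ₗ[K] K ⊗[F] A := π.baseChange K with hP
    have claim1 : ∀ x ∈ (comp' h).baseChange K, P x = x := by
      intro x hx
      rw [Submodule.baseChange_eq_span] at hx
      refine Submodule.span_induction ?_ (by simp) (fun a b _ _ ha hb => by
        rw [map_add, ha, hb]) (fun c a _ ha => by rw [map_smul, ha]) hx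
      rintro - ⟨m, hm, rfl⟩
      simp [hP, hπ_id m hm]
    have claim2 : (⨆ j, ⨆ _ : j ≠ h, (comp' j).baseChange K) ≤ LinearMap.ker P := by
      refine iSup_le fun j => iSup_le fun hj => ?_
      rw [Submodule.baseChange_eq_span, Submodule.span_le]
      rintro - ⟨m, hm, rfl⟩
      have hm' : m ∈ ⨆ j, ⨆ _ : j ≠ h, comp' j :=
        le_iSup₂ (f := fun j (_ : j ≠ h) => comp' j) j hj hm
      simp [hP, hπ_zero m hm']
    rw [disjoint_iff_inf_le]
    intro x hx
    have h1 : P x = x := claim1 x hx.1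
    have h2 : P x = 0 := claim2 hx.2
    rw [Submodule.mem_bot, ← h1, h2]
  · rw [eq_top_iff]
    have htop : (⊤ : Submodule K (K ⊗[F] A)) = (⨆ g, comp' g).baseChange K := by
      rw [hsup, Submodule.baseChange_top]
    rw [htop, Submodule.baseChange_eq_span]
    refine Submodule.span_le.mpr ?_
    rintro - ⟨m, hm, rfl⟩
    refine Submodule.iSup_induction (motive := fun z : A =>
        (TensorProduct.mk F K A) 1 z ∈ ⨆ g, (comp' g).baseChange K) comp' hm
      (fun i x hx => ?_) (by simp) (fun x y hx hy => ?_)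
    · exact Submodule.mem_iSup_of_mem i (Submodule.tmul_mem_baseChange_of_mem _ hx)
    · simpa [TensorProduct.tmul_add] using Submodule.add_mem _ hx hy
  · intro g h a b ha hb
    have key : ∀ m ∈ comp' g, ∀ b ∈ (comp' h).baseChange K,
        ((1:K) ⊗ₜ[F] m) * b ∈ (comp' (g * h)).baseChange K := by
      intro m hm b hb
      rw [Submodule.baseChange_eq_span] at hb
      refine Submodule.span_induction ?_ (by simp [mul_zero]) (fun x y _ _ hx hy => by
        rw [mul_add]; exact Submodule.add_mem _ hx hy) (fun c x _ hx => by
        rw [mul_smul_comm]; exact Submodule.smul_mem _ _ hx) hb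
      rintro - ⟨n, hn, rfl⟩
      have heq : ((1:K) ⊗ₜ[F] m) * ((1:K) ⊗ₜ[F] n) = (1:K) ⊗ₜ[F] (m * n) := by
        rw [Algebra.TensorProduct.tmul_mul_tmul, one_mul]
      rw [TensorProduct.mk_apply, heq]
      exact Submodule.tmul_mem_baseChange_of_mem _ (hmul g h m n hm hn)
    have ha' : a ∈ Submodule.span K
        (((comp' g).map (TensorProduct.mk F K A 1) : Submodule F (K ⊗[F] A)) :
          Set (K ⊗[F] A)) := by simpa only [Submodule.baseChange_eq_span] using ha
    refine Submodule.span_induction ?_ (by simp [zero_mul]) (fun x y _ _ hx hy => by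
      rw [add_mul]; exact Submodule.add_mem _ hx hy) (fun c x _ hx => by
      rw [smul_mul_assoc]; exact Submodule.smul_mem _ _ hx) ha'
    rintro - ⟨m, hm, rfl⟩
    exact key m hm b hb

end Aux2

/-- a proper refinement extends to a proper refinement of the extended grading;
consequently if `Γ_K` is fine so is `Γ`. -/
theorem properRefinement_baseChange
    {F : Type*} [Field F] {K : Type*} [Field K] [Algebra F K]
    {A : Type*} [NonUnitalNonAssocRing A] [Module F A]
    [SMulCommClass F A A] [IsScalarTower F A A]
    {G : Type*} [CommGroup G] (comp : G → Submodule F A)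
    (hcomp : IsGrading comp) :
    (∀ (H : Type u) (_ : CommGroup H) (comp' : H → Submodule F A),
        IsGrading comp' → IsProperRefinement comp' comp →
          IsProperRefinement (fun h : H => (comp' h).baseChange K)
            (fun g : G => (comp g).baseChange K)) ∧
    (IsFine.{u} (fun g : G => (comp g).baseChange K) → IsFine.{u} comp) := by
  have main : ∀ (H : Type u) (_ : CommGroup H) (comp' : H → Submodule F A),
      IsGrading comp' → IsProperRefinement comp' comp →
        IsProperRefinement (fun h : H => (comp' h).baseChange K)
          (fun g : G => (comp g).baseChange K) := by
    rintro H _ comp' hgr ⟨href, h, hh, g, hgsupp, hlt⟩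
    refine ⟨?_, h, aux_baseChange_ne_bot hh, g, aux_baseChange_ne_bot hgsupp,
      aux_baseChange_lt hlt⟩
    intro h' hh'
    have hne : comp' h' ≠ ⊥ := by
      intro hb
      apply hh'
      show (comp' h').baseChange K = ⊥
      rw [hb, Submodule.baseChange_bot]
    obtain ⟨g', hg', hle⟩ := href h' hne
    exact ⟨g', aux_baseChange_ne_bot hg', aux_baseChange_mono hle⟩
  refine ⟨main, fun hfine H iH comp' hgr hprop => ?_⟩
  exact hfine H iH (fun h => (comp' h).baseChange K)
    (aux_grading_baseChange comp' hgr) (main H iH comp' hgr hprop)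
end
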